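/- arXiv:0802.3703 — 4 statements merged into one kernel-verified Lean document; each statement's English description precedes it below -/
import Mathlib

section
/- For elements x = (s, t) and y = (u, v) of the cobweb poset Π(F) with x ≤ y and t < v, the cardinality of the closed interval [x, y] = {z : x ≤ z ≤ y} equals (Σ_{i=t+1}^{v-1} F i) + 2. -/
/-- The underlying set of the cobweb poset. -/
def CobwebSet (F : ℕ → ℕ) : Set (ℕ × ℕ) := {p | 1 ≤ p.1 ∧ p.1 ≤ F p.2}

/-- The cobweb relation on pairs `(j, s)`. -/
def cobwebRel (x y : ℕ × ℕ) : Prop := x.2 < y.2 ∨ (x.2 = y.2 ∧ x.1 = y.1)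

/-- The cobweb poset `Π(F)` as a type. -/
def Cobweb (F : ℕ → ℕ) : Type := {p : ℕ × ℕ // 1 ≤ p.1 ∧ p.1 ≤ F p.2}

instance (F : ℕ → ℕ) : PartialOrder (Cobweb F) where
  le x y := x.val.2 < y.val.2 ∨ (x.val.2 = y.val.2 ∧ x.val.1 = y.val.1)
  le_refl x := Or.inr ⟨rfl, rfl⟩
  le_trans x y z hxy hyz := by
    rcases hxy with h | ⟨h1, h2⟩ <;> rcases hyz with h' | ⟨h1', h2'⟩
    · exact Or.inl (h.trans h')
    · exact Or.inl (h1' ▸ h)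
    · exact Or.inl (h1 ▸ h')
    · exact Or.inr ⟨h1.trans h1', h2.trans h2'⟩
  le_antisymm x y hxy hyx := by
    rcases hxy with h | ⟨h1, h2⟩ <;> rcases hyx with h' | ⟨h1', h2'⟩
    · exact absurd (h.trans h') (lt_irrefl _)
    · exfalso; omega
    · exfalso; omega
    · exact Subtype.ext (Prod.ext h2 h1)

/-- for `x = (s, t) ≤ y = (u, v)` with `t < v`, the cardinality of the
closed interval `[x, y]` equals `(Σ_{i=t+1}^{v-1} F i) + 2`. -/
theorem cobweb_card_interval (F : ℕ → ℕ) (hF : ∀ s, 1 ≤ F s) (hF0 : F 0 = 1)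
    (x y : Cobweb F) (hxy : x ≤ y) (h : x.val.2 < y.val.2) :
    {z : Cobweb F | x ≤ z ∧ z ≤ y}.ncard =
      (∑ i ∈ Finset.Icc (x.val.2 + 1) (y.val.2 - 1), F i) + 2 := by
  have hle : ∀ a b : Cobweb F, a ≤ b ↔
      (a.val.2 < b.val.2 ∨ (a.val.2 = b.val.2 ∧ a.val.1 = b.val.1)) := fun a b => Iff.rfl
  obtain ⟨hx1, hx2⟩ := x.2
  obtain ⟨hy1, hy2⟩ := y.2
  set t := x.val.2 with ht
  set v := y.val.2 with hv
  set B : Finset (ℕ × ℕ) :=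
    (Finset.Icc (t+1) (v-1)).biUnion
      (fun i => (Finset.Icc 1 (F i)).image (fun j => (j, i))) with hB
  have hmemB : ∀ p : ℕ × ℕ, p ∈ B ↔ (t+1 ≤ p.2 ∧ p.2 ≤ v-1 ∧ 1 ≤ p.1 ∧ p.1 ≤ F p.2) := by
    rintro ⟨a, b⟩
    simp only [hB, Finset.mem_biUnion, Finset.mem_image, Finset.mem_Icc, Prod.mk.injEq]
    constructor
    · rintro ⟨i, ⟨h1, h2⟩, j, ⟨h3, h4⟩, rfl, rfl⟩
      exact ⟨h1, h2, h3, h4⟩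
    · rintro ⟨h1, h2, h3, h4⟩
      exact ⟨b, ⟨h1, h2⟩, a, ⟨h3, h4⟩, rfl, rfl⟩
  set T : Finset (ℕ × ℕ) := insert x.val (insert y.val B) with hT
  have key : Subtype.val '' {z : Cobweb F | x ≤ z ∧ z ≤ y} = ↑T := by
    ext p
    simp only [Set.mem_image, Set.mem_setOf_eq, hT, Finset.coe_insert, Set.mem_insert_iff,
      Finset.mem_coe, hmemB]
    constructor
    · rintro ⟨z, ⟨hx, hy⟩, rfl⟩
      obtain ⟨hz1, hz2⟩ := z.2
      rcases (hle x z).mp hx with h1 | ⟨h1, h2⟩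
      · rcases (hle z y).mp hy with h3 | ⟨h3, h4⟩
        · right; right; exact ⟨by omega, by omega, hz1, hz2⟩
        · right; left; exact Prod.ext h4 h3
      · left; exact (Prod.ext h2 h1).symm
    · rintro (rfl | rfl | ⟨h1, h2, h3, h4⟩)
      · exact ⟨x, ⟨le_refl _, hxy⟩, rfl⟩
      · exact ⟨y, ⟨hxy, le_refl _⟩, rfl⟩
      · refine ⟨⟨p, h3, h4⟩, ⟨(hle _ _).mpr ?_, (hle _ _).mpr ?_⟩, rfl⟩
        · exact Or.inl (show t < p.2 by omega)
        · exact Or.inl (show p.2 < v by omega)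
  have hcard : {z : Cobweb F | x ≤ z ∧ z ≤ y}.ncard = T.card := by
    rw [← Set.ncard_coe_finset, ← key, Set.ncard_image_of_injective _ Subtype.val_injective]
    rfl
  rw [hcard]
  have hxT : x.val ∉ insert y.val B := by
    simp only [Finset.mem_insert, hmemB]
    push_neg
    refine ⟨fun hc => ?_, fun h1 => by omega⟩
    have : x.val.2 = y.val.2 := by rw [hc]
    omega
  have hyT : y.val ∉ B := by
    rw [hmemB]; push_neg; intro h1; omega
  rw [hT, Finset.card_insert_of_notMem hxT, Finset.card_insert_of_notMem hyT]
  have hBcard : B.card = ∑ i ∈ Finset.Icc (t+1) (v-1), F i := by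
    rw [hB, Finset.card_biUnion]
    · refine Finset.sum_congr rfl fun i _ => ?_
      rw [Finset.card_image_of_injective _ (fun a b hab => (Prod.mk.injEq _ _ _ _ ▸ hab).1),
        Nat.card_Icc]
      omega
    · intro i _ j _ hij
      simp only [Finset.disjoint_left, Finset.mem_image, Finset.mem_Icc, Prod.mk.injEq]
      rintro ⟨a, b⟩ ⟨c, hc, rfl, rfl⟩ ⟨d, hd, hda, he⟩
      exact hij rfl
  omega
end

section
/- The Möbius function μ of the cobweb poset Π(F) is given explicitly as follows: for x = (s, t) and y = (u, v) in Π(F), μ(x, x) = 1; if v = t + 1 then μ(x, y) = −1; if v ≥ t + 2 then μ(x, y) = (−1)^{v−t} · Π_{i=t+1}^{v−1} (F i − 1); and μ(x, y) = 0 whenever x ≤ y fails. -/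
lemma cobweb_sum_aux (G : ℕ → ℤ) (t : ℕ) : ∀ m : ℕ,
    1 + ∑ s ∈ Finset.Icc (t+1) (t+m),
        G s * ((-1)^(s-t) * ∏ i ∈ Finset.Icc (t+1) (s-1), (G i - 1))
    = (-1)^m * ∏ i ∈ Finset.Icc (t+1) (t+m), (G i - 1) := by
  intro m
  induction m with
  | zero => simp
  | succ m ih =>
    rw [show t+(m+1) = (t+m)+1 from rfl, Finset.sum_Icc_succ_top (by omega),
      Finset.prod_Icc_succ_top (by omega)]
    have e1 : t+m+1-t = m+1 := by omega
    have e2 : t+m+1-1 = t+m := by omega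
    rw [e1, e2]
    linear_combination ih

lemma cobweb_le_iff {F : ℕ → ℕ} (x y : Cobweb F) :
    x ≤ y ↔ (x.val.2 < y.val.2 ∨ (x.val.2 = y.val.2 ∧ x.val.1 = y.val.1)) := Iff.rfl

lemma cobweb_key (F : ℕ → ℕ) (hF : ∀ s, 1 ≤ F s)
    (μ : Cobweb F → Cobweb F → ℤ)
    (hdiag : ∀ x, μ x x = 1)
    (hrec : ∀ x y, x < y → μ x y = -∑ᶠ z ∈ Set.Ico x y, μ x z) :
    ∀ n : ℕ, ∀ x y : Cobweb F, y.val.2 = x.val.2 + (n+1) →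
      μ x y = (-1)^(n+1) *
        ∏ i ∈ Finset.Icc (x.val.2+1) (x.val.2+n), ((F i : ℤ) - 1) := by
  intro n
  induction n using Nat.strong_induction_on with
  | _ n IH =>
  intro x y hy
  set t := x.val.2 with ht
  have hxy : x < y := by
    rw [lt_iff_le_not_ge, cobweb_le_iff, cobweb_le_iff]
    constructor
    · exact Or.inl (by omega)
    · rintro (h | ⟨h1, h2⟩) <;> omega
  rw [hrec x y hxy]
  set ν : ℕ × ℕ → ℤ := fun p => if h : 1 ≤ p.1 ∧ p.1 ≤ F p.2 then μ x ⟨p, h⟩ else 0 with hν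
  have h1 : ∑ᶠ z ∈ Set.Ico x y, μ x z = ∑ᶠ z ∈ Set.Ico x y, ν z.val := by
    refine finsum_mem_congr rfl fun z _ => ?_
    simp [hν, z.property]
    rfl
  set B : Finset (ℕ × ℕ) :=
    (Finset.Icc (t+1) (t+n)).biUnion (fun s => (Finset.Icc 1 (F s)).image fun j => (j, s)) with hB
  have hxB : x.val ∉ B := by
    simp only [hB, Finset.mem_biUnion, Finset.mem_image, Finset.mem_Icc]
    rintro ⟨s, hs, j, hj, hp⟩
    have : s = x.val.2 := congrArg Prod.snd hp
    omega
  have hT : (fun z : Cobweb F => z.val) '' Set.Ico x y = ↑(insert x.val B) := by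
    ext p
    simp only [Set.mem_image, Finset.coe_insert, Set.mem_insert_iff, hB,
      Finset.coe_biUnion, Finset.mem_coe, Finset.mem_Icc, Set.mem_iUnion,
      Finset.mem_image, Finset.mem_biUnion]
    constructor
    · rintro ⟨z, ⟨hxz, hzy⟩, rfl⟩
      have hzy' := lt_iff_le_not_ge.1 hzy
      have hlt : z.val.2 < y.val.2 := by
        rcases hzy'.1 with h | ⟨a, b⟩
        · exact h
        · exact absurd (Or.inr ⟨a.symm, b.symm⟩) hzy'.2
      rcases hxz with h | ⟨a, b⟩
      · refine Or.inr ⟨z.val.2, ⟨by omega, by omega⟩, z.val.1, ⟨z.property.1, z.property.2⟩, rfl⟩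
      · exact Or.inl (Prod.ext b a).symm
    · rintro (rfl | ⟨s, hs, j, hj, rfl⟩)
      · exact ⟨x, ⟨le_refl x, hxy⟩, rfl⟩
      · refine ⟨⟨(j, s), hj.1, hj.2⟩, ⟨Or.inl (by omega : t < s), ?_⟩, rfl⟩
        have hz : ((⟨(j, s), hj.1, hj.2⟩ : Cobweb F)).val.2 = s := rfl
        refine lt_iff_le_not_ge.2 ?_
        constructor
        · exact Or.inl (by omega)
        · rintro (h | ⟨a, b⟩) <;> omega
  have h2 : ∑ᶠ z ∈ Set.Ico x y, ν z.val = ∑ p ∈ insert x.val B, ν p := by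
    rw [← finsum_mem_image (f := ν) (g := fun z : Cobweb F => z.val) (s := Set.Ico x y)
      (fun a _ b _ h => Subtype.ext h), hT, finsum_mem_coe_finset]
  have hterm : ∀ s ∈ Finset.Icc (t+1) (t+n), ∀ j ∈ Finset.Icc 1 (F s),
      ν (j, s) = (-1)^(s-t) * ∏ i ∈ Finset.Icc (t+1) (s-1), ((F i : ℤ) - 1) := by
    intro s hs j hj
    rw [Finset.mem_Icc] at hs hj
    have hmem : 1 ≤ (j, s).1 ∧ (j, s).1 ≤ F (j, s).2 := ⟨hj.1, hj.2⟩
    simp only [hν]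
    rw [dif_pos hmem]
    have := IH (s - t - 1) (by omega) x ⟨(j, s), hmem⟩
      (by show s = x.val.2 + (s - x.val.2 - 1 + 1); omega)
    rw [this]
    have e1 : s - t - 1 + 1 = s - t := by omega
    have e2 : t + (s - t - 1) = s - 1 := by omega
    rw [e1, e2]
  have h3 : ∑ p ∈ insert x.val B, ν p =
      1 + ∑ s ∈ Finset.Icc (t+1) (t+n),
        (F s : ℤ) * ((-1)^(s-t) * ∏ i ∈ Finset.Icc (t+1) (s-1), ((F i : ℤ) - 1)) := by
    rw [Finset.sum_insert hxB]
    congr 1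
    · simp only [hν]
      rw [dif_pos x.property]
      exact hdiag x
    · rw [hB, Finset.sum_biUnion]
      · refine Finset.sum_congr rfl fun s hs => ?_
        rw [Finset.sum_image (by intro a _ b _ h; exact congrArg Prod.fst h)]
        rw [Finset.sum_congr rfl (hterm s hs), Finset.sum_const, Nat.card_Icc]
        simp [mul_comm]
      · intro a ha b hb hab
        simp only [Finset.coe_Icc, Set.mem_Icc] at ha hb
        refine Finset.disjoint_left.2 fun p hp hp' => ?_
        simp only [Finset.mem_image] at hp hp'
        obtain ⟨_, _, rfl⟩ := hp
        obtain ⟨_, _, h⟩ := hp'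
        exact hab (congrArg Prod.snd h).symm
  rw [h1, h2, h3, cobweb_sum_aux (fun i => (F i : ℤ)) t n]
  ring

/-- the Möbius function of the cobweb poset (defined by the usual
recursion `μ(x,x) = 1`, `μ(x,y) = -Σ_{x ≤ z < y} μ(x,z)` for `x < y`, and
`μ(x,y) = 0` unless `x ≤ y`) is given explicitly: `μ(x,x) = 1`; `μ(x,y) = -1`
when `v = t + 1`; `μ(x,y) = (-1)^(v-t) · Π_{i=t+1}^{v-1} (F i - 1)` when
`v ≥ t + 2`; and `μ(x,y) = 0` unless `x ≤ y`. -/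
theorem cobweb_mobius_formula (F : ℕ → ℕ) (hF : ∀ s, 1 ≤ F s) (hF0 : F 0 = 1)
    (μ : Cobweb F → Cobweb F → ℤ)
    (hdiag : ∀ x, μ x x = 1)
    (hrec : ∀ x y, x < y → μ x y = -∑ᶠ z ∈ Set.Ico x y, μ x z)
    (hzero : ∀ x y, ¬x ≤ y → μ x y = 0) :
    ∀ x y : Cobweb F,
      (μ x x = 1) ∧
      (y.val.2 = x.val.2 + 1 → μ x y = -1) ∧
      (x.val.2 + 2 ≤ y.val.2 →
        μ x y = (-1) ^ (y.val.2 - x.val.2) *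
          ∏ i ∈ Finset.Icc (x.val.2 + 1) (y.val.2 - 1), ((F i : ℤ) - 1)) ∧
      (¬x ≤ y → μ x y = 0) := by
  intro x y
  refine ⟨hdiag x, ?_, ?_, hzero x y⟩
  · intro h
    rw [cobweb_key F hF μ hdiag hrec 0 x y (by omega)]
    rw [Finset.Icc_eq_empty (by omega)]
    simp
  · intro h
    have key := cobweb_key F hF μ hdiag hrec (y.val.2 - x.val.2 - 1) x y (by omega)
    have e1 : (y.val.2 - x.val.2 - 1) + 1 = y.val.2 - x.val.2 := by omega
    have e2 : x.val.2 + (y.val.2 - x.val.2 - 1) = y.val.2 - 1 := by omega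
    rw [e1, e2] at key
    exact key
end

section
/- For k ≥ 1 and elements x = (s, t) and y = (u, v) of the cobweb poset Π(F), the number of maximal chains x = z₀ ⋖ z₁ ⋖ ⋯ ⋖ z_{k−1} ⋖ z_k = y of length k (each z_{i+1} covering z_i) equals F(t+1) · F(t+2) ⋯ F(v−1) if v = t + k and x ≤ y, and equals 0 if v ≠ t + k. -/
lemma Cobweb.le_def {F : ℕ → ℕ} (a b : Cobweb F) :
    a ≤ b ↔ (a.val.2 < b.val.2 ∨ (a.val.2 = b.val.2 ∧ a.val.1 = b.val.1)) := Iff.rfl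

lemma Cobweb.lt_iff {F : ℕ → ℕ} (a b : Cobweb F) : a < b ↔ a.val.2 < b.val.2 := by
  constructor
  · rintro ⟨hle, hnle⟩
    rcases hle with h | ⟨h1, h2⟩
    · exact h
    · exact absurd (Or.inr ⟨h1.symm, h2.symm⟩) hnle
  · intro h
    refine ⟨Or.inl h, ?_⟩
    rintro (h' | ⟨h1, h2⟩)
    · exact absurd (h.trans h') (lt_irrefl _)
    · exact absurd (h1 ▸ h) (lt_irrefl _)

lemma Cobweb.covby_iff {F : ℕ → ℕ} (hF : ∀ s, 1 ≤ F s) (a b : Cobweb F) :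
    a ⋖ b ↔ b.val.2 = a.val.2 + 1 := by
  constructor
  · rintro ⟨hab, hmid⟩
    rw [Cobweb.lt_iff] at hab
    by_contra hne
    have h2 : a.val.2 + 1 < b.val.2 := by omega
    have hz : (1, a.val.2 + 1) ∈ CobwebSet F := ⟨le_refl 1, hF _⟩
    exact hmid ((Cobweb.lt_iff a ⟨_, hz⟩).2 (Nat.lt_succ_self _))
      ((Cobweb.lt_iff ⟨_, hz⟩ b).2 h2)
  · intro h
    refine ⟨(Cobweb.lt_iff a b).2 (by omega), ?_⟩
    intro z hz hzb
    rw [Cobweb.lt_iff] at hz hzb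
    omega

lemma Cobweb.chain_level {F : ℕ → ℕ} (hF : ∀ s, 1 ≤ F s) {k : ℕ}
    (c : Fin (k + 1) → Cobweb F) (h : ∀ i : Fin k, c i.castSucc ⋖ c i.succ)
    (j : Fin (k + 1)) : (c j).val.2 = (c 0).val.2 + j.val := by
  obtain ⟨j, hj⟩ := j
  induction j with
  | zero => rfl
  | succ n ih =>
    have hn : n < k := by omega
    have := (Cobweb.covby_iff hF _ _).1 (h ⟨n, hn⟩)
    have ihn := ih (by omega)
    simp only [Fin.castSucc, Fin.succ, Fin.castAdd, Fin.castLE] at this ihn ⊢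
    omega

/-- for `k ≥ 1`, the number of maximal chains
`x = z₀ ⋖ z₁ ⋖ ⋯ ⋖ z_k = y` of length `k` from `x = (s, t)` to `y = (u, v)`
equals `F(t+1) · F(t+2) ⋯ F(v-1)` if `v = t + k` and `x ≤ y`, and equals `0`
if `v ≠ t + k`. -/
theorem cobweb_count_maximal_chains_of_length (F : ℕ → ℕ) (hF : ∀ s, 1 ≤ F s)
    (hF0 : F 0 = 1) (k : ℕ) (hk : 1 ≤ k) (x y : Cobweb F) :
    (y.val.2 = x.val.2 + k → x ≤ y →
      {c : Fin (k + 1) → Cobweb F |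
          (∀ i : Fin k, c i.castSucc ⋖ c i.succ) ∧ c 0 = x ∧ c (Fin.last k) = y}.ncard =
        ∏ i ∈ Finset.Icc (x.val.2 + 1) (y.val.2 - 1), F i) ∧
    (y.val.2 ≠ x.val.2 + k →
      {c : Fin (k + 1) → Cobweb F |
          (∀ i : Fin k, c i.castSucc ⋖ c i.succ) ∧ c 0 = x ∧ c (Fin.last k) = y}.ncard = 0) := by
  set t := x.val.2 with ht
  set v := y.val.2 with hv
  constructor
  · intro hvt _
    -- bijection with dependent product
    set S := {c : Fin (k + 1) → Cobweb F |
        (∀ i : Fin k, c i.castSucc ⋖ c i.succ) ∧ c 0 = x ∧ c (Fin.last k) = y} with hS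
    -- define g
    have hg : ∀ (f : (i : Fin (k - 1)) → Fin (F (t + 1 + i))) (j : Fin (k + 1)),
        (if h0 : j.val = 0 then x.val.1 else if h' : j.val = k then y.val.1
          else (f ⟨j.val - 1, by have := j.isLt; omega⟩).val + 1, t + j.val) ∈ CobwebSet F := by
      intro f j
      dsimp [CobwebSet]
      split
      · next h0 => rw [h0, Nat.add_zero]; exact x.property
      · split
        · next _ hk' => rw [hk', ← hvt]; exact y.property
        · next h0 hk' =>
          have hb := (f ⟨j.val - 1, by have := j.isLt; omega⟩).isLt
          have hj1 : t + 1 + (j.val - 1) = t + j.val := by omega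
          rw [← hj1]
          exact ⟨Nat.le_add_left 1 _, hb⟩
    let e : S ≃ ((i : Fin (k - 1)) → Fin (F (t + 1 + i))) :=
      { toFun := fun c i => ⟨(c.val ⟨i.val + 1, by omega⟩).val.1 - 1, by
          have hc := c.property
          have hlev := Cobweb.chain_level hF c.val hc.1 ⟨i.val + 1, by omega⟩
          have hp := (c.val ⟨i.val + 1, by omega⟩).property
          rw [hc.2.1] at hlev
          have : t + 1 + i.val = t + (i.val + 1) := by omega
          rw [this]
          rw [← hlev]
          omega⟩
        invFun := fun f => ⟨fun j => ⟨_, hg f j⟩, by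
          refine ⟨?_, ?_, ?_⟩
          · intro i
            refine (Cobweb.covby_iff hF _ _).2 ?_
            simp [Fin.castSucc, Fin.succ]
            omega
          · apply Subtype.ext
            simp
            rfl
          · apply Subtype.ext
            have hk0 : ¬ (k = 0) := by omega
            simp [Fin.last, hk0, ← hvt]
            rfl⟩
        left_inv := by
          rintro ⟨c, hc1, hc2, hc3⟩
          apply Subtype.ext
          funext j
          apply Subtype.ext
          have hlev := Cobweb.chain_level hF c hc1 j
          rw [hc2] at hlev
          dsimp only
          refine Prod.ext ?_ hlev.symm
          dsimp only
          split
          · next h0 =>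
            have : j = 0 := Fin.ext h0
            rw [this, hc2]
          · split
            · next _ hk' =>
              have : j = Fin.last k := Fin.ext hk'
              rw [this, hc3]
            · next h0 hk' =>
              have hje : (⟨(j.val - 1) + 1, by omega⟩ : Fin (k + 1)) = j := Fin.ext (by simp; omega)
              rw [hje]
              have hp := (c j).property
              omega
        right_inv := by
          intro f
          funext i
          apply Fin.ext
          dsimp only
          have h0 : ¬ (i.val + 1 = 0) := by omega
          have hk' : ¬ (i.val + 1 = k) := by have := i.isLt; omega
          rw [dif_neg h0, dif_neg hk']
          show (f i).val + 1 - 1 = (f i).val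
          omega }
    have hcard : S.ncard = Nat.card ((i : Fin (k - 1)) → Fin (F (t + 1 + i))) :=
      Nat.card_congr e
    rw [hcard, Nat.card_eq_fintype_card, Fintype.card_pi]
    simp only [Fintype.card_fin]
    have hIcc : Finset.Icc (t + 1) (v - 1) = Finset.Ico (t + 1) v := by
      rw [← Finset.Ico_add_one_right_eq_Icc]
      congr 1
      omega
    rw [hIcc, Finset.prod_Ico_eq_prod_range]
    have hn : v - (t + 1) = k - 1 := by omega
    rw [hn, ← Fin.prod_univ_eq_prod_range]
  · intro hne
    have hemp : {c : Fin (k + 1) → Cobweb F |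
        (∀ i : Fin k, c i.castSucc ⋖ c i.succ) ∧ c 0 = x ∧ c (Fin.last k) = y} = ∅ := by
      ext c
      simp only [Set.mem_setOf_eq, Set.mem_empty_iff_false, iff_false]
      rintro ⟨h1, h2, h3⟩
      have := Cobweb.chain_level hF c h1 (Fin.last k)
      rw [h2, h3] at this
      simp only [Fin.val_last] at this
      exact hne this
    rw [hemp]
    exact Set.ncard_empty _
end

section
/- For elements x = (s, t) and y = (u, v) of the cobweb poset Π(F) with x < y, the total number of maximal chains from x to y (saturated chains x = z₀ ⋖ z₁ ⋖ ⋯ ⋖ z_m = y of any length m ≥ 1) equals Π_{i=t+1}^{v−1} F i. -/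
lemma cobweb_le_iff_s9 (F : ℕ → ℕ) (a b : Cobweb F) :
    a ≤ b ↔ (a.val.2 < b.val.2 ∨ (a.val.2 = b.val.2 ∧ a.val.1 = b.val.1)) := Iff.rfl

lemma cobweb_lt_iff (F : ℕ → ℕ) (a b : Cobweb F) :
    a < b ↔ a.val.2 < b.val.2 := by
  rw [lt_iff_le_not_ge, cobweb_le_iff_s9, cobweb_le_iff_s9]
  constructor
  · rintro ⟨h | ⟨h1, h2⟩, hn⟩
    · exact h
    · exact absurd (Or.inr ⟨h1.symm, h2.symm⟩) hn
  · intro h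
    exact ⟨Or.inl h, by rintro (h' | ⟨h1, h2⟩) <;> omega⟩

lemma cobweb_covBy_iff (F : ℕ → ℕ) (hF : ∀ s, 1 ≤ F s) (a b : Cobweb F) :
    a ⋖ b ↔ b.val.2 = a.val.2 + 1 := by
  constructor
  · rintro ⟨hlt, hnot⟩
    rw [cobweb_lt_iff] at hlt
    by_contra hne
    exact hnot (c := (⟨(1, a.val.2 + 1), le_refl 1, hF _⟩ : Cobweb F))
      ((cobweb_lt_iff F _ _).2 (Nat.lt_succ_self _)) ((cobweb_lt_iff F _ _).2 (show a.val.2 + 1 < b.val.2 by omega))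
  · intro h
    refine ⟨(cobweb_lt_iff F _ _).2 (by omega), fun z hz hz' => ?_⟩
    rw [cobweb_lt_iff] at hz hz'
    omega

lemma cobweb_chain_level (F : ℕ → ℕ) (l : List (Cobweb F))
    (h : l.Chain' (fun a b => b.val.2 = a.val.2 + 1)) :
    ∀ i (hi : i < l.length), (l.get ⟨i, hi⟩).val.2 = (l.get ⟨0, by omega⟩).val.2 + i := by
  intro i
  induction i with
  | zero => intro hi; rfl
  | succ k ih =>
    intro hi
    have hk : k < l.length := by omega
    have : (l.get ⟨k+1, hi⟩).val.2 = (l.get ⟨k, hk⟩).val.2 + 1 :=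
      (List.isChain_iff_getElem.1 h) k (by omega)
    rw [this, ih hk]; omega

/-- `midElem`: an element of the cobweb poset at level `s` with value `j` clamped. -/
def midElem (F : ℕ → ℕ) (hF : ∀ s, 1 ≤ F s) (j s : ℕ) : Cobweb F :=
  ⟨(max 1 (min j (F s)), s), le_max_left _ _, by show max 1 (min j (F s)) ≤ F s; have := hF s; omega⟩

lemma midElem_val (F : ℕ → ℕ) (hF : ∀ s, 1 ≤ F s) (j s : ℕ) (h1 : 1 ≤ j) (h2 : j ≤ F s) :
    (midElem F hF j s).val.1 = j := by
  show max 1 (min j (F s)) = j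
  omega

/-- The maximal chain from `x` to `y` determined by intermediate values `g`. -/
def chainList (F : ℕ → ℕ) (hF : ∀ s, 1 ≤ F s) (x y : Cobweb F) (m : ℕ)
    (g : Fin m → ℕ) : List (Cobweb F) :=
  x :: (List.ofFn (fun i : Fin m => midElem F hF (g i) (x.val.2 + 1 + i)) ++ [y])

lemma chainList_length (F : ℕ → ℕ) (hF : ∀ s, 1 ≤ F s) (x y : Cobweb F) (m : ℕ)
    (g : Fin m → ℕ) : (chainList F hF x y m g).length = m + 2 := by
  simp [chainList]

lemma chainList_get_zero (F : ℕ → ℕ) (hF : ∀ s, 1 ≤ F s) (x y : Cobweb F) (m : ℕ)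
    (g : Fin m → ℕ) : (chainList F hF x y m g)[0]'(by simp [chainList_length]) = x := rfl

lemma chainList_get_mid (F : ℕ → ℕ) (hF : ∀ s, 1 ≤ F s) (x y : Cobweb F) (m : ℕ)
    (g : Fin m → ℕ) (i : ℕ) (hi : i < m) :
    (chainList F hF x y m g)[i+1]'(by simp [chainList_length]; omega) =
      midElem F hF (g ⟨i, hi⟩) (x.val.2 + 1 + i) := by
  simp [chainList, List.getElem_append, hi]

lemma chainList_get_last (F : ℕ → ℕ) (hF : ∀ s, 1 ≤ F s) (x y : Cobweb F) (m : ℕ)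
    (g : Fin m → ℕ) :
    (chainList F hF x y m g)[m+1]'(by simp [chainList_length]) = y := by
  simp [chainList, List.getElem_append]

lemma chainList_level (F : ℕ → ℕ) (hF : ∀ s, 1 ≤ F s) (x y : Cobweb F) (m : ℕ)
    (g : Fin m → ℕ) (hm : x.val.2 + m + 1 = y.val.2) (i : ℕ) (hi : i < m + 2) :
    ((chainList F hF x y m g)[i]'(by simp [chainList_length]; omega)).val.2 =
      x.val.2 + i := by
  rcases Nat.eq_zero_or_pos i with h0 | h0
  · subst h0; rw [chainList_get_zero]; omega
  · rcases Nat.lt_or_ge i (m + 1) with h1 | h1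
    · obtain ⟨j, rfl⟩ : ∃ j, i = j + 1 := ⟨i - 1, by omega⟩
      rw [chainList_get_mid F hF x y m g j (by omega)]
      show x.val.2 + 1 + j = x.val.2 + (j + 1)
      omega
    · have : i = m + 1 := by omega
      subst this
      rw [chainList_get_last]
      omega

lemma chainList_chain' (F : ℕ → ℕ) (hF : ∀ s, 1 ≤ F s) (x y : Cobweb F) (m : ℕ)
    (g : Fin m → ℕ) (hm : x.val.2 + m + 1 = y.val.2) :
    (chainList F hF x y m g).Chain' (fun a b => b.val.2 = a.val.2 + 1) := by
  rw [List.Chain', List.isChain_iff_getElem]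
  intro i h
  rw [chainList_level F hF x y m g hm i (by rw [chainList_length] at h; omega),
    chainList_level F hF x y m g hm (i+1) (by rw [chainList_length] at h; omega)]
  omega


/-- for `x = (s, t) < y = (u, v)`, the total number of maximal
(saturated) chains `x = z₀ ⋖ z₁ ⋖ ⋯ ⋖ z_m = y` (of any length `m ≥ 1`,
encoded as lists of consecutive covers from `x` to `y`) equals
`Π_{i=t+1}^{v-1} F i`. -/
theorem cobweb_count_all_maximal_chains (F : ℕ → ℕ) (hF : ∀ s, 1 ≤ F s)
    (hF0 : F 0 = 1) (x y : Cobweb F) (hxy : x < y) :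
    {l : List (Cobweb F) | l.Chain' (· ⋖ ·) ∧ l.head? = some x ∧
        l.getLast? = some y ∧ 2 ≤ l.length}.ncard =
      ∏ i ∈ Finset.Icc (x.val.2 + 1) (y.val.2 - 1), F i := by
  classical
  have htv : x.val.2 < y.val.2 := (cobweb_lt_iff F x y).1 hxy
  set t := x.val.2 with ht
  set v := y.val.2 with hv
  set m := v - t - 1 with hm'
  have hm : t + m + 1 = v := by omega
  set P : Finset (Fin m → ℕ) :=
    Fintype.piFinset (fun i : Fin m => Finset.Icc 1 (F (t + 1 + i))) with hP
  have hset : {l : List (Cobweb F) | l.Chain' (· ⋖ ·) ∧ l.head? = some x ∧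
      l.getLast? = some y ∧ 2 ≤ l.length} = ↑(P.image (chainList F hF x y m)) := by
    ext l
    simp only [Set.mem_setOf_eq, Finset.coe_image, Set.mem_image, Finset.mem_coe]
    constructor
    · rintro ⟨hc, hh, hl, h2⟩
      have hne : l ≠ [] := by rintro rfl; simp at h2
      have hc' : l.Chain' (fun a b => b.val.2 = a.val.2 + 1) :=
        hc.imp (fun a b hab => (cobweb_covBy_iff F hF a b).1 hab)
      have h0 : l.get ⟨0, by omega⟩ = x := by
        cases l with
        | nil => exact absurd rfl hne
        | cons a l' => simpa using hh
      have hlev := cobweb_chain_level F l hc'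
      have hlast : l.getLast hne = y := by
        rw [List.getLast?_eq_getLast hne] at hl
        exact Option.some.inj hl
      have hlastget : l.getLast hne = l.get ⟨l.length - 1, by omega⟩ := by
        rw [List.getLast_eq_getElem]; rfl
      have hlen : l.length = m + 2 := by
        have := hlev (l.length - 1) (by omega)
        rw [← hlastget, hlast, h0] at this
        omega
      refine ⟨fun i => (l.get ⟨i + 1, by omega⟩).val.1, ?_, ?_⟩
      · rw [hP, Fintype.mem_piFinset]
        intro i
        have hlevi : (l.get ⟨(i : ℕ) + 1, by omega⟩).val.2 = t + 1 + i := by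
          rw [hlev ((i : ℕ) + 1) (by omega), h0]; omega
        have hprop := (l.get ⟨(i : ℕ) + 1, by omega⟩).property
        rw [Finset.mem_Icc]
        exact ⟨hprop.1, by rw [← hlevi]; exact hprop.2⟩
      · refine List.ext_get (by rw [chainList_length]; omega) ?_
        intro i h₁ h₂
        simp only [List.get_eq_getElem]
        rw [chainList_length] at h₁
        rcases Nat.eq_zero_or_pos i with rfl | hpos
        · rw [chainList_get_zero]
          exact h0.symm
        · rcases Nat.lt_or_ge i (m + 1) with hlt | hge
          · obtain ⟨j, rfl⟩ : ∃ j, i = j + 1 := ⟨i - 1, by omega⟩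
            have hj : j < m := by omega
            rw [chainList_get_mid F hF x y m _ j hj]
            have hlevj : (l.get ⟨j + 1, by omega⟩).val.2 = t + 1 + j := by
              rw [hlev (j + 1) (by omega), h0]; omega
            have hprop := (l.get ⟨j + 1, by omega⟩).property
            apply Subtype.ext
            apply Prod.ext
            · exact midElem_val F hF _ _ hprop.1 (by rw [← hlevj]; exact hprop.2)
            · exact hlevj.symm
          · have : i = m + 1 := by omega
            subst this
            rw [chainList_get_last]
            rw [hlastget] at hlast
            simp only [List.get_eq_getElem, hlen] at hlast
            exact hlast.symm
    · rintro ⟨g, hg, rfl⟩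
      refine ⟨(chainList_chain' F hF x y m g hm).imp
        (fun a b hab => (cobweb_covBy_iff F hF a b).2 hab), rfl, ?_, by
          rw [chainList_length]; omega⟩
      have hne : chainList F hF x y m g ≠ [] := by
        intro h; have := chainList_length F hF x y m g; rw [h] at this; simp at this
      rw [List.getLast?_eq_getLast hne]
      congr 1
      rw [List.getLast_eq_getElem]
      simp only [List.get_eq_getElem, chainList_length]
      exact chainList_get_last F hF x y m g
  rw [hset, Set.ncard_coe_finset]
  rw [Finset.card_image_of_injOn]
  · rw [hP, Fintype.card_piFinset]
    have hcard : ∀ i : Fin m, (Finset.Icc 1 (F (t + 1 + i))).card = F (t + 1 + i) := by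
      intro i; rw [Nat.card_Icc]; have := hF (t + 1 + i); omega
    rw [Finset.prod_congr rfl (fun i _ => hcard i)]
    have h1 : Finset.Icc (t + 1) (v - 1) = Finset.Ico (t + 1) v := by
      rw [← Finset.Ico_add_one_right_eq_Icc]
      congr 1
      omega
    rw [h1, Finset.prod_Ico_eq_prod_range]
    have h2 : v - (t + 1) = m := by omega
    rw [h2, ← Fin.prod_univ_eq_prod_range (fun i => F (t + 1 + i)) m]
  · intro g₁ hg₁ g₂ hg₂ heq
    funext i
    have h₀ : (chainList F hF x y m g₁)[(i : ℕ) + 1]? =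
        (chainList F hF x y m g₂)[(i : ℕ) + 1]? := by rw [heq]
    rw [List.getElem?_eq_getElem (by rw [chainList_length]; omega),
      List.getElem?_eq_getElem (by rw [chainList_length]; omega)] at h₀
    have h₁ := Option.some.inj h₀
    rw [chainList_get_mid F hF x y m g₁ i i.isLt, chainList_get_mid F hF x y m g₂ i i.isLt]
      at h₁
    rw [Finset.mem_coe, Fintype.mem_piFinset] at hg₁ hg₂
    have hb₁ := Finset.mem_Icc.1 (hg₁ i)
    have hb₂ := Finset.mem_Icc.1 (hg₂ i)
    have := congrArg (fun z : Cobweb F => z.val.1) h₁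
    rwa [midElem_val F hF _ _ hb₁.1 hb₁.2, midElem_val F hF _ _ hb₂.1 hb₂.2] at this
end
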